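/- Each component of the VI-SLAM measurement function is equivariant: for every X = (A, β, B, (Q_i)) ∈ G, every ξ ∈ 𝒯, and every index k, h^k(φ(X, ξ)) = R_{Q_k}ᵀ h^k(ξ). -/

import Mathlib

noncomputable section
open Matrix

abbrev Mat3 := Matrix (Fin 3) (Fin 3) ℝ
abbrev Vec3 := EuclideanSpace ℝ (Fin 3)
abbrev Vec6 := EuclideanSpace ℝ (Fin 6)

/-- Membership in `SO(3)`. -/
def SO3 (R : Mat3) : Prop := Rᵀ * R = 1 ∧ R.det = 1

/-- The standard gravity direction `e₃ = (0,0,1)`. -/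
def e3 : Vec3 := WithLp.toLp 2 ![0, 0, 1]

/-- Matrix-vector multiplication on `ℝ³`. -/
def mulv (M : Mat3) (v : Vec3) : Vec3 := WithLp.toLp 2 (M.mulVec v)

/-- `SE(3)` elements as (rotation, translation) pairs `(R_P, x_P)`. -/
abbrev SE3 := Mat3 × Vec3
def SE3.mul (P Q : SE3) : SE3 := (P.1 * Q.1, P.2 + mulv P.1 Q.2)
def SE3.one : SE3 := (1, 0)
def SE3.inv (P : SE3) : SE3 := (P.1ᵀ, -(mulv P.1ᵀ P.2))
/-- The action of `SE(3)` on `ℝ³`: `P p = R_P p + x_P`. -/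
def SE3.act (P : SE3) (p : Vec3) : Vec3 := mulv P.1 p + P.2

/-- Membership in `SE_{e₃}(3) := {(R,x) ∈ SE(3) | R e₃ = e₃}`. -/
def SEe3 (S : SE3) : Prop := SO3 S.1 ∧ mulv S.1 e3 = e3

/-- `SOT(3)` elements as pairs `(R_Q, c_Q)`. -/
abbrev SOT3 := Mat3 × ℝ
def SOT3.mem (Q : SOT3) : Prop := SO3 Q.1 ∧ 0 < Q.2
def SOT3.mul (Q₁ Q₂ : SOT3) : SOT3 := (Q₁.1 * Q₂.1, Q₁.2 * Q₂.2)
def SOT3.one : SOT3 := (1, 1)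
def SOT3.inv (Q : SOT3) : SOT3 := (Q.1ᵀ, Q.2⁻¹)
/-- The action of `SOT(3)` on `ℝ³`: `Q p = c_Q R_Q p`. -/
def SOT3.act (Q : SOT3) (p : Vec3) : Vec3 := Q.2 • mulv Q.1 p

/-- `SE₂(3)` elements as triples `(R_A, x_A, v_A)`. -/
abbrev SE23 := Mat3 × Vec3 × Vec3
def SE23.mem (A : SE23) : Prop := SO3 A.1
def SE23.mul (A₁ A₂ : SE23) : SE23 :=
  (A₁.1 * A₂.1, A₁.2.1 + mulv A₁.1 A₂.2.1, A₁.2.2 + mulv A₁.1 A₂.2.2)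
def SE23.one : SE23 := (1, 0, 0)
/-- The pose component `P_A = (R_A, x_A)` of `A = (P_A, v_A) ∈ SE₂(3)`. -/
def SE23.P (A : SE23) : SE3 := (A.1, A.2.1)

/-- A point of the ambient VI-SLAM state space with `n` landmarks. -/
structure VIState (n : ℕ) where
  P : SE3            -- pose of the IMU `(R_B, x_B)`
  v : Vec3           -- linear velocity `v_B`
  b : Vec6           -- IMU bias `b_B`
  T : SE3            -- camera extrinsics
  p : Fin n → Vec3   -- landmark positions

/-- Membership in the VI-SLAM total space `𝒯`. -/
def VIState.mem {n : ℕ} (ξ : VIState n) : Prop :=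
  SO3 ξ.P.1 ∧ SO3 ξ.T.1 ∧ ∀ i, SE3.act (SE3.inv (SE3.mul ξ.P ξ.T)) (ξ.p i) ≠ 0

/-- An element `X = (A, β, B, (Q_i))` of the group `G = SE₂(3) × ℝ⁶ × SE(3) × SOT(3)ⁿ`. -/
structure GElem (n : ℕ) where
  A : SE23
  β : Vec6
  B : SE3
  Q : Fin n → SOT3

def GElem.mem {n : ℕ} (X : GElem n) : Prop :=
  SE23.mem X.A ∧ SO3 X.B.1 ∧ ∀ i, SOT3.mem (X.Q i)

/-- Componentwise product on `G`. -/
def GElem.mul {n : ℕ} (X₁ X₂ : GElem n) : GElem n :=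
  ⟨SE23.mul X₁.A X₂.A, X₁.β + X₂.β, SE3.mul X₁.B X₂.B, fun i => SOT3.mul (X₁.Q i) (X₂.Q i)⟩

def GElem.one (n : ℕ) : GElem n := ⟨SE23.one, 0, SE3.one, fun _ => SOT3.one⟩

/-- The group action
`φ(X, ξ) := (φ^B(A, ξ_B), b_B + β, P_A⁻¹ T B, (P_B T B (Q_i⁻¹ ((P_B T)⁻¹ p_i))))`. -/
def phi {n : ℕ} (X : GElem n) (ξ : VIState n) : VIState n :=
  ⟨SE3.mul ξ.P (SE23.P X.A), ξ.v + mulv ξ.P.1 X.A.2.2, ξ.b + X.β,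
   SE3.mul (SE3.mul (SE3.inv (SE23.P X.A)) ξ.T) X.B,
   fun i => SE3.act (SE3.mul (SE3.mul ξ.P ξ.T) X.B)
     (SOT3.act (SOT3.inv (X.Q i)) (SE3.act (SE3.inv (SE3.mul ξ.P ξ.T)) (ξ.p i)))⟩

/-- The `k`-th component of the measurement function: `h^k(ξ) = q_k/|q_k|`
with `q_k = (P_B T)⁻¹ p_k`. -/
def hComp {n : ℕ} (ξ : VIState n) (k : Fin n) : Vec3 :=
  ‖SE3.act (SE3.inv (SE3.mul ξ.P ξ.T)) (ξ.p k)‖⁻¹ •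
    SE3.act (SE3.inv (SE3.mul ξ.P ξ.T)) (ξ.p k)


section Helpers

lemma mulv_add (M : Mat3) (x y : Vec3) : mulv M (x + y) = mulv M x + mulv M y := by
  simp [mulv, Matrix.mulVec_add]

lemma mulv_neg (M : Mat3) (x : Vec3) : mulv M (-x) = -(mulv M x) := by
  simp [mulv, Matrix.mulVec_neg]

lemma mulv_smul (M : Mat3) (c : ℝ) (x : Vec3) : mulv M (c • x) = c • mulv M x := by
  simp [mulv, Matrix.mulVec_smul]

lemma mulv_mulv (M N : Mat3) (x : Vec3) : mulv M (mulv N x) = mulv (M * N) x := by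
  simp [mulv, Matrix.mulVec_mulVec]

lemma mulv_one (x : Vec3) : mulv 1 x = x := by simp [mulv]

lemma norm_mulv_eq (M : Mat3) (h : Mᵀ * M = 1) (v : Vec3) : ‖mulv M v‖ = ‖v‖ := by
  have key : ∀ w : Vec3, ‖w‖ = Real.sqrt ((w : Fin 3 → ℝ) ⬝ᵥ w) := by
    intro w
    rw [EuclideanSpace.norm_eq]
    congr 1
    simp [dotProduct, sq_abs, pow_two]
  rw [key, key v]
  congr 1
  show (M.mulVec v) ⬝ᵥ (M.mulVec v) = v ⬝ᵥ v
  rw [Matrix.dotProduct_mulVec, ← Matrix.vecMul_transpose M v, Matrix.vecMul_vecMul, h,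
    Matrix.vecMul_one]

lemma SE3.mul_assoc' (P Q S : SE3) : SE3.mul (SE3.mul P Q) S = SE3.mul P (SE3.mul Q S) := by
  unfold SE3.mul
  ext1
  · exact mul_assoc _ _ _
  · show P.2 + mulv P.1 Q.2 + mulv (P.1 * Q.1) S.2 = P.2 + mulv P.1 (Q.2 + mulv Q.1 S.2)
    rw [mulv_add, ← mulv_mulv, add_assoc]

lemma SE3.one_mul' (P : SE3) : SE3.mul SE3.one P = P := by
  unfold SE3.mul SE3.one
  ext1
  · exact one_mul _
  · show (0 : Vec3) + mulv 1 P.2 = P.2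
    rw [mulv_one, zero_add]

lemma SE3.mul_inv_self (P : SE3) (h : P.1 * P.1ᵀ = 1) : SE3.mul P (SE3.inv P) = SE3.one := by
  unfold SE3.mul SE3.inv SE3.one
  ext1
  · exact h
  · show P.2 + mulv P.1 (-(mulv P.1ᵀ P.2)) = 0
    rw [mulv_neg, mulv_mulv, h, mulv_one, add_neg_cancel]

lemma SE3.act_inv_act (P : SE3) (h : P.1ᵀ * P.1 = 1) (p : Vec3) :
    SE3.act (SE3.inv P) (SE3.act P p) = p := by
  unfold SE3.act SE3.inv
  show mulv P.1ᵀ (mulv P.1 p + P.2) + -(mulv P.1ᵀ P.2) = p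
  rw [mulv_add, mulv_mulv, h, mulv_one]
  abel

lemma orth_mul {M N : Mat3} (hM : Mᵀ * M = 1) (hN : Nᵀ * N = 1) :
    (M * N)ᵀ * (M * N) = 1 := by
  rw [Matrix.transpose_mul, mul_assoc, ← mul_assoc Mᵀ M N, hM, one_mul, hN]

end Helpers

/-- Each component of the VI-SLAM measurement function is equivariant:
`h^k(φ(X, ξ)) = R_{Q_k}ᵀ h^k(ξ)` for every `X = (A, β, B, (Q_i)) ∈ G`, `ξ ∈ 𝒯` and `k`. -/
theorem h_component_equivariant (n : ℕ) (hn : 1 ≤ n) (X : GElem n) (ξ : VIState n)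
    (hX : X.mem) (hξ : ξ.mem) (k : Fin n) :
    hComp (phi X ξ) k = mulv (X.Q k).1ᵀ (hComp ξ k) := by
  obtain ⟨hB, hT, -⟩ := hξ
  obtain ⟨hA, hBg, hQ⟩ := hX
  obtain ⟨⟨hR, -⟩, hc⟩ := hQ k
  set q := SE3.act (SE3.inv (SE3.mul ξ.P ξ.T)) (ξ.p k) with hq
  have hAo : X.A.1 * X.A.1ᵀ = 1 := mul_eq_one_comm.mp hA.1
  have hCmul : SE3.mul (phi X ξ).P (phi X ξ).T = SE3.mul (SE3.mul ξ.P ξ.T) X.B := by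
    show SE3.mul (SE3.mul ξ.P (SE23.P X.A))
        (SE3.mul (SE3.mul (SE3.inv (SE23.P X.A)) ξ.T) X.B) = _
    rw [SE3.mul_assoc' (SE3.inv (SE23.P X.A)) ξ.T X.B,
      SE3.mul_assoc' ξ.P (SE23.P X.A) _,
      ← SE3.mul_assoc' (SE23.P X.A) (SE3.inv (SE23.P X.A)) _,
      SE3.mul_inv_self _ hAo, SE3.one_mul', SE3.mul_assoc']
  have hCo : (SE3.mul (SE3.mul ξ.P ξ.T) X.B).1ᵀ * (SE3.mul (SE3.mul ξ.P ξ.T) X.B).1 = 1 :=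
    orth_mul (orth_mul hB.1 hT.1) hBg.1
  have hq' : SE3.act (SE3.inv (SE3.mul (phi X ξ).P (phi X ξ).T)) ((phi X ξ).p k)
      = SOT3.act (SOT3.inv (X.Q k)) q := by
    show SE3.act (SE3.inv (SE3.mul (phi X ξ).P (phi X ξ).T))
        (SE3.act (SE3.mul (SE3.mul ξ.P ξ.T) X.B) (SOT3.act (SOT3.inv (X.Q k)) q)) = _
    rw [hCmul]
    exact SE3.act_inv_act _ hCo _
  unfold hComp
  rw [hq', ← hq]
  show ‖(X.Q k).2⁻¹ • mulv (X.Q k).1ᵀ q‖⁻¹ • ((X.Q k).2⁻¹ • mulv (X.Q k).1ᵀ q)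
      = mulv (X.Q k).1ᵀ (‖q‖⁻¹ • q)
  have hRo : (X.Q k).1ᵀᵀ * (X.Q k).1ᵀ = 1 := by
    rw [Matrix.transpose_transpose]
    exact mul_eq_one_comm.mp hR
  rw [norm_smul, norm_mulv_eq _ hRo, Real.norm_eq_abs,
    abs_of_pos (inv_pos.mpr hc), mulv_smul, smul_smul,
    mul_inv, inv_inv, mul_right_comm, mul_inv_cancel₀ (ne_of_gt hc), one_mul]
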